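/- The prefix coding of prediction suffix tree models is complete: for every depth bound D, ∑_{M ∈ C_D} 2^{−Γ_D(M)} = 1, where C_D is the set of all binary tree models of depth at most D and Γ_D(M) equals the number of nodes of M minus the number of leaves of M at depth exactly D. -/
import Mathlib


/-- A model of a prediction suffix tree: a finite binary tree in which every
internal node has exactly two children. -/
inductive BinTree where
  | leaf : BinTree
  | node : BinTree → BinTree → BinTree
deriving DecidableEq

namespace BinTree

/-- Depth of a tree (a single leaf has depth 0). -/
def depth : BinTree → ℕ
  | leaf => 0
  | node l r => max l.depth r.depth + 1

/-- Total number of nodes (internal nodes and leaves). -/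
def numNodes : BinTree → ℕ
  | leaf => 1
  | node l r => l.numNodes + r.numNodes + 1

/-- Number of leaves at depth exactly `d`. -/
def leavesAt : ℕ → BinTree → ℕ
  | 0, leaf => 1
  | 0, node _ _ => 0
  | _ + 1, leaf => 0
  | d + 1, node l r => leavesAt d l + leavesAt d r

/-- The prefix-code cost `Γ_D(M)`: number of nodes of `M` minus the number of
leaves of `M` at depth exactly `D`. -/
def cost (D : ℕ) (M : BinTree) : ℕ := M.numNodes - leavesAt D M

end BinTree

namespace BinTree

lemma leavesAt_le_numNodes : ∀ (d : ℕ) (M : BinTree), leavesAt d M ≤ numNodes M := by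
  intro d M
  induction M generalizing d with
  | leaf => cases d <;> simp [leavesAt, numNodes]
  | node l r ihl ihr =>
    cases d with
    | zero => simp [leavesAt, numNodes]
    | succ d =>
      simp only [leavesAt, numNodes]
      have := ihl d; have := ihr d; omega

lemma cost_node (D : ℕ) (l r : BinTree) :
    cost (D + 1) (node l r) = cost D l + cost D r + 1 := by
  have hl := leavesAt_le_numNodes D l
  have hr := leavesAt_le_numNodes D r
  simp only [cost, numNodes, leavesAt]
  omega

lemma eq_leaf_of_depth_le_zero {M : BinTree} (h : M.depth ≤ 0) : M = leaf := by
  cases M with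
  | leaf => rfl
  | node l r => simp [depth] at h

/-- Trees of depth ≤ 0: just the leaf. -/
def split0 : {M : BinTree // M.depth ≤ 0} ≃ Unit where
  toFun := fun _ => ()
  invFun := fun _ => ⟨.leaf, le_refl 0⟩
  left_inv := by rintro ⟨M, hM⟩; simp [eq_leaf_of_depth_le_zero hM]
  right_inv := by rintro ⟨⟩; rfl

/-- Splitting trees of depth ≤ D+1 into the leaf and pairs of subtrees. -/
def split (D : ℕ) :
    {M : BinTree // M.depth ≤ D + 1} ≃
      Unit ⊕ ({M : BinTree // M.depth ≤ D} × {M : BinTree // M.depth ≤ D}) where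
  toFun := fun ⟨M, h⟩ =>
    match M, h with
    | .leaf, _ => Sum.inl ()
    | .node l r, h => Sum.inr
        (⟨l, by simp only [depth] at h; have := le_max_left l.depth r.depth; omega⟩,
         ⟨r, by simp only [depth] at h; have := le_max_right l.depth r.depth; omega⟩)
  invFun := fun x =>
    match x with
    | Sum.inl _ => ⟨.leaf, by simp [depth]⟩
    | Sum.inr (l, r) => ⟨.node l.1 r.1, Nat.succ_le_succ (max_le l.2 r.2)⟩
  left_inv := by rintro ⟨(_ | ⟨l, r⟩), h⟩ <;> rfl
  right_inv := by rintro (⟨⟩ | ⟨⟨l, hl⟩, ⟨r, hr⟩⟩) <;> rfl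

instance fintypeSub : ∀ D : ℕ, Fintype {M : BinTree // M.depth ≤ D}
  | 0 => Fintype.ofEquiv Unit split0.symm
  | D + 1 =>
    letI := fintypeSub D
    Fintype.ofEquiv _ (split D).symm

lemma sum_eq (D : ℕ) :
    (∑ M : {M : BinTree // M.depth ≤ D}, (2 : ℝ) ^ (-(cost D M.1 : ℤ))) = 1 := by
  induction D with
  | zero =>
    rw [← Equiv.sum_comp split0.symm
      (fun M : {M : BinTree // M.depth ≤ 0} => (2 : ℝ) ^ (-(cost 0 M.1 : ℤ)))]
    simp [split0, cost, numNodes, leavesAt]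
  | succ D ih =>
    rw [← Equiv.sum_comp (split D).symm
      (fun M : {M : BinTree // M.depth ≤ D + 1} => (2 : ℝ) ^ (-(cost (D + 1) M.1 : ℤ))),
      Fintype.sum_sum_type]
    have h1 : (∑ x : Unit, (2 : ℝ) ^ (-(cost (D + 1) ((split D).symm (Sum.inl x)).1 : ℤ)))
        = 2⁻¹ := by
      simp [split, cost, numNodes, leavesAt]
    have h2 : ∀ p : {M : BinTree // M.depth ≤ D} × {M : BinTree // M.depth ≤ D},
        (2 : ℝ) ^ (-(cost (D + 1) ((split D).symm (Sum.inr p)).1 : ℤ))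
          = 2⁻¹ * ((2 : ℝ) ^ (-(cost D p.1.1 : ℤ)) * (2 : ℝ) ^ (-(cost D p.2.1 : ℤ))) := by
      rintro ⟨⟨l, hl⟩, ⟨r, hr⟩⟩
      show (2 : ℝ) ^ (-(cost (D + 1) (node l r) : ℤ)) = _
      rw [cost_node]
      push_cast
      rw [show (-(↑(cost D l) + ↑(cost D r) + 1) : ℤ)
          = (-1) + (-(cost D l : ℤ)) + (-(cost D r : ℤ)) by ring,
        zpow_add₀ (by norm_num : (2 : ℝ) ≠ 0), zpow_add₀ (by norm_num : (2 : ℝ) ≠ 0)]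
      norm_num
      ring
    rw [h1]
    simp only [h2]
    rw [← Finset.mul_sum, Fintype.sum_prod_type]
    dsimp only
    rw [← Finset.sum_mul_sum, ih]
    norm_num

end BinTree


/-- the prefix code on tree models is complete: for every depth
bound `D`, `∑_{M ∈ C_D} 2^{−Γ_D(M)} = 1`, where `C_D` is the set of all binary
tree models of depth at most `D`. -/
theorem prefix_code_complete (D : ℕ) :
    HasSum (fun M : {M : BinTree // M.depth ≤ D} =>
      (2 : ℝ) ^ (-(BinTree.cost D M.1 : ℤ))) 1 := by
  have h := hasSum_fintype (fun M : {M : BinTree // M.depth ≤ D} =>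
    (2 : ℝ) ^ (-(BinTree.cost D M.1 : ℤ)))
  rwa [BinTree.sum_eq D] at h
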